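/- Let U, V be closed subspaces of a Hilbert space X with U ∩ V = {0} and U + V closed. Then the couple (U, V) is regular: for each ε > 0 there exists δ > 0 such that ‖x‖ ≤ ε whenever max{dist(x,U), dist(x,V)} ≤ δ. -/

import Mathlib

open Pointwise

theorem stmt14 {X : Type*} [NormedAddCommGroup X] [InnerProductSpace ℝ X] [CompleteSpace X]
    (U V : Submodule ℝ X) (hUc : IsClosed (U : Set X)) (hVc : IsClosed (V : Set X))
    (hUV : U ⊓ V = ⊥) (hsum : IsClosed ((U : Set X) + (V : Set X))) :
    ∀ ε > (0 : ℝ), ∃ δ > (0 : ℝ), ∀ x : X,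
      max (Metric.infDist x (U : Set X)) (Metric.infDist x (V : Set X)) ≤ δ → ‖x‖ ≤ ε := by
  -- set up the closed subspace W = U ⊔ V
  set W : Submodule ℝ X := U ⊔ V with hW
  have hWc : IsClosed (W : Set X) := by rw [hW, Submodule.coe_sup]; exact hsum
  haveI : CompleteSpace U := hUc.completeSpace_coe
  haveI : CompleteSpace V := hVc.completeSpace_coe
  haveI : CompleteSpace W := hWc.completeSpace_coe
  -- the continuous linear map (u, v) ↦ u + v : U × V → W
  have hUW : U ≤ W := le_sup_left
  have hVW : V ≤ W := le_sup_right
  let f₀ : (U × V) →ₗ[ℝ] W :=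
    LinearMap.coprod (Submodule.inclusion hUW) (Submodule.inclusion hVW)
  have hf₀ : ∀ p : U × V, ‖f₀ p‖ ≤ 2 * ‖p‖ := by
    intro p
    have h1 : ‖f₀ p‖ ≤ ‖p.1‖ + ‖p.2‖ := by
      have : (f₀ p : X) = (p.1 : X) + (p.2 : X) := rfl
      calc ‖f₀ p‖ = ‖(f₀ p : X)‖ := rfl
        _ = ‖(p.1 : X) + (p.2 : X)‖ := by rw [this]
        _ ≤ ‖(p.1 : X)‖ + ‖(p.2 : X)‖ := norm_add_le _ _
    have h2 : ‖p.1‖ ≤ ‖p‖ := le_max_left _ _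
    have h3 : ‖p.2‖ ≤ ‖p‖ := le_max_right _ _
    linarith
  let f : (U × V) →L[ℝ] W := f₀.mkContinuous 2 hf₀
  have hker : LinearMap.ker (f : U × V →ₗ[ℝ] W) = ⊥ := by
    rw [LinearMap.ker_eq_bot]
    intro p q hpq
    have h1 : (p.1 : X) + (p.2 : X) = (q.1 : X) + (q.2 : X) :=
      congrArg Subtype.val hpq
    have h2 : (p.1 : X) - (q.1 : X) = (q.2 : X) - (p.2 : X) :=
      sub_eq_sub_iff_add_eq_add.mpr (h1.trans (add_comm _ _))
    have hmem : (p.1 : X) - (q.1 : X) ∈ U ⊓ V := by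
      constructor
      · exact U.sub_mem p.1.2 q.1.2
      · rw [h2]; exact V.sub_mem q.2.2 p.2.2
    rw [hUV, Submodule.mem_bot, sub_eq_zero] at hmem
    have hmem2 : (p.2 : X) = (q.2 : X) := by
      have h1' := h1; rw [hmem] at h1'; exact add_left_cancel h1'
    exact Prod.ext (Subtype.ext hmem) (Subtype.ext hmem2)
  have hrange : LinearMap.range (f : U × V →ₗ[ℝ] W) = ⊤ := by
    rw [LinearMap.range_eq_top]
    rintro ⟨w, hw⟩
    rw [hW] at hw
    obtain ⟨u, hu, v, hv, huv⟩ := Submodule.mem_sup.mp hw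
    exact ⟨(⟨u, hu⟩, ⟨v, hv⟩), Subtype.ext huv⟩
  let e := ContinuousLinearEquiv.ofBijective f hker hrange
  -- the key bound : ‖u‖ ≤ C ‖u + v‖
  set C : ℝ := ‖(e.symm : W →L[ℝ] (U × V))‖ + 1 with hC
  have hC0 : 0 < C := by positivity
  have key : ∀ u ∈ U, ∀ v ∈ V, ‖u‖ ≤ C * ‖u + v‖ := by
    intro u hu v hv
    have huvW : u + v ∈ W := W.add_mem (hUW hu) (hVW hv)
    have hfe : f (⟨u, hu⟩, ⟨v, hv⟩) = ⟨u + v, huvW⟩ := rfl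
    have h1 : e.symm ⟨u + v, huvW⟩ = (⟨u, hu⟩, ⟨v, hv⟩) := by
      rw [← hfe]
      exact ContinuousLinearEquiv.symm_apply_apply e _
    have h2 : ‖e.symm ⟨u + v, huvW⟩‖ ≤ ‖(e.symm : W →L[ℝ] (U × V))‖ * ‖(⟨u + v, huvW⟩ : W)‖ :=
      (e.symm : W →L[ℝ] (U × V)).le_opNorm _
    have h3 : ‖u‖ ≤ ‖e.symm ⟨u + v, huvW⟩‖ := by
      rw [h1]
      exact le_max_left _ _
    have h4 : ‖(⟨u + v, huvW⟩ : W)‖ = ‖u + v‖ := rfl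
    have h5 : ‖(e.symm : W →L[ℝ] (U × V))‖ * ‖u + v‖ ≤ C * ‖u + v‖ := by
      apply mul_le_mul_of_nonneg_right _ (norm_nonneg _)
      rw [hC]; linarith
    rw [h4] at h2
    linarith
  -- main argument
  intro ε hε
  refine ⟨ε / (3 + 4 * C), by positivity, ?_⟩
  intro x hx
  set δ : ℝ := ε / (3 + 4 * C) with hδ
  have hδ0 : 0 < δ := by positivity
  have hxU : Metric.infDist x (U : Set X) ≤ δ := le_trans (le_max_left _ _) hx
  have hxV : Metric.infDist x (V : Set X) ≤ δ := le_trans (le_max_right _ _) hx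
  have hUne : (U : Set X).Nonempty := ⟨0, U.zero_mem⟩
  have hVne : (V : Set X).Nonempty := ⟨0, V.zero_mem⟩
  obtain ⟨u, hu, hxu⟩ := (Metric.infDist_lt_iff hUne).mp
    (lt_of_le_of_lt hxU (by linarith : δ < 2 * δ))
  obtain ⟨v, hv, hxv⟩ := (Metric.infDist_lt_iff hVne).mp
    (lt_of_le_of_lt hxV (by linarith : δ < 2 * δ))
  rw [dist_eq_norm] at hxu hxv
  have hvV : -v ∈ V := V.neg_mem hv
  have huv : ‖u + -v‖ ≤ 4 * δ := by
    have : u + -v = (u - x) + (x - v) := by abel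
    rw [this]
    calc ‖(u - x) + (x - v)‖ ≤ ‖u - x‖ + ‖x - v‖ := norm_add_le _ _
      _ = ‖x - u‖ + ‖x - v‖ := by rw [norm_sub_rev]
      _ ≤ 4 * δ := by linarith
  have hu_bound : ‖u‖ ≤ C * (4 * δ) := by
    calc ‖u‖ ≤ C * ‖u + -v‖ := key u hu (-v) hvV
      _ ≤ C * (4 * δ) := mul_le_mul_of_nonneg_left huv hC0.le
  have hxnorm : ‖x‖ ≤ ‖x - u‖ + ‖u‖ := by
    have hx' : x = (x - u) + u := by abel
    calc ‖x‖ = ‖(x - u) + u‖ := by rw [← hx']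
      _ ≤ ‖x - u‖ + ‖u‖ := norm_add_le _ _
  have hfinal : ‖x‖ ≤ 2 * δ + 4 * C * δ := by nlinarith
  have : (3 + 4 * C) * δ = ε := by
    rw [hδ]; field_simp
  nlinarith
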